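/- arXiv:2409.02949 — 4 statements merged into one kernel-verified Lean document; each statement's English description precedes it below -/
import Mathlib

section
/- The integral ∫₀¹ (1 - e^{-t} - e^{-1/t})/t dt equals the Euler–Mascheroni constant γ. -/
open MeasureTheory Set Real Filter Topology

lemma aux_log_exp_integral :
    ∫ t in Ioi (0:ℝ), Real.log t * Real.exp (-t) = -Real.eulerMascheroniConstant := by
  have h1 := Complex.hasDerivAt_GammaIntegral (s := 1) (by norm_num)
  have heq : Complex.Gamma =ᶠ[𝓝 (1:ℂ)] Complex.GammaIntegral := by
    filter_upwards [IsOpen.mem_nhds (isOpen_lt continuous_const Complex.continuous_re)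
      (by norm_num : (0:ℝ) < (1:ℂ).re)] with s hs
    exact Complex.Gamma_eq_integral hs
  have h2 : HasDerivAt Complex.Gamma
      (∫ t : ℝ in Ioi 0, (t:ℂ) ^ ((1:ℂ) - 1) * (Real.log t * Real.exp (-t))) 1 :=
    h1.congr_of_eventuallyEq heq
  have h3 : HasDerivAt (fun x : ℝ => Complex.Gamma x)
      (∫ t : ℝ in Ioi 0, (t:ℂ) ^ ((1:ℂ) - 1) * (Real.log t * Real.exp (-t))) 1 := by
    exact_mod_cast h2.comp_ofReal
  have h4 : HasDerivAt (fun x : ℝ => ((Real.Gamma x : ℂ)))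
      ((-Real.eulerMascheroniConstant : ℝ) : ℂ) 1 :=
    Real.hasDerivAt_Gamma_one.ofReal_comp
  have h5 : (∫ t : ℝ in Ioi 0, (t:ℂ) ^ ((1:ℂ) - 1) * (Real.log t * Real.exp (-t)))
      = ((-Real.eulerMascheroniConstant : ℝ) : ℂ) := by
    refine h3.unique ?_
    refine h4.congr_of_eventuallyEq ?_
    filter_upwards with x using Complex.Gamma_ofReal x
  have h6 : (∫ t : ℝ in Ioi 0, (t:ℂ) ^ ((1:ℂ) - 1) * (Real.log t * Real.exp (-t)))
      = ((∫ t : ℝ in Ioi 0, Real.log t * Real.exp (-t) : ℝ) : ℂ) := by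
    rw [show ((∫ t : ℝ in Ioi 0, Real.log t * Real.exp (-t) : ℝ) : ℂ)
        = ∫ t : ℝ in Ioi 0, ((Real.log t * Real.exp (-t) : ℝ) : ℂ) from (integral_ofReal).symm]
    refine setIntegral_congr_fun measurableSet_Ioi fun t ht => ?_
    rw [sub_self, Complex.cpow_zero, one_mul]
    push_cast
    ring
  rw [h6] at h5
  exact_mod_cast h5

lemma int1 : IntegrableOn (fun t : ℝ => (1 - Real.exp (-t))/t) (Ioc 0 1) := by
  apply Measure.integrableOn_of_bounded (M := 1) (by simp : volume (Ioc (0:ℝ) 1) ≠ ⊤)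
  · apply Measurable.aestronglyMeasurable; fun_prop
  · rw [ae_restrict_iff' measurableSet_Ioc]
    filter_upwards with t ht
    have h0 : 0 < t := ht.1
    have he1 : Real.exp (-t) ≤ 1 := Real.exp_le_one_iff.mpr (by linarith)
    have he2 : 1 - t ≤ Real.exp (-t) := by linarith [Real.add_one_le_exp (-t)]
    rw [Real.norm_eq_abs, abs_of_nonneg (div_nonneg (by linarith) h0.le)]
    rw [div_le_one h0]; linarith

lemma int2 : IntegrableOn (fun t : ℝ => Real.exp (-1/t)/t) (Ioc 0 1) := by
  apply Measure.integrableOn_of_bounded (M := 1) (by simp : volume (Ioc (0:ℝ) 1) ≠ ⊤)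
  · apply Measurable.aestronglyMeasurable; fun_prop
  · rw [ae_restrict_iff' measurableSet_Ioc]
    filter_upwards with t ht
    have h0 : 0 < t := ht.1
    have h1 : 1/t + 1 ≤ Real.exp (1/t) := Real.add_one_le_exp _
    have h3 : (0:ℝ) < Real.exp (1/t) := Real.exp_pos _
    rw [Real.norm_eq_abs, abs_of_nonneg (div_nonneg (Real.exp_nonneg _) h0.le), div_le_one h0]
    rw [show (-1/t : ℝ) = -(1/t) by ring, Real.exp_neg, inv_eq_one_div, div_le_iff₀ h3]
    have ht1 : t * (1/t) = 1 := by field_simp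
    nlinarith [mul_le_mul_of_nonneg_left h1 h0.le]

lemma int3 : IntegrableOn (fun t : ℝ => Real.exp (-t)/t) (Ioi 1) := by
  refine Integrable.mono (exp_neg_integrableOn_Ioi 1 one_pos) ?_ ?_
  · apply Measurable.aestronglyMeasurable; fun_prop
  · rw [ae_restrict_iff' measurableSet_Ioi]
    filter_upwards with t ht
    have h0 : (1:ℝ) < t := ht
    rw [neg_one_mul, Real.norm_eq_abs, Real.norm_eq_abs,
      abs_of_nonneg (div_nonneg (Real.exp_nonneg _) (by linarith)), abs_of_nonneg (Real.exp_nonneg _)]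
    exact div_le_self (Real.exp_nonneg _) h0.le

lemma int4 : IntegrableOn (fun t : ℝ => Real.log t * Real.exp (-t)) (Ioi 1) := by
  have hg : IntegrableOn (fun t : ℝ => t * Real.exp (-t)) (Ioi 1) := by
    have h := Real.GammaIntegral_convergent (s := 2) (by norm_num)
    have h2 : IntegrableOn (fun t : ℝ => t * Real.exp (-t)) (Ioi 0) := by
      refine h.congr_fun (fun x hx => ?_) measurableSet_Ioi
      rw [show ((2:ℝ)-1) = 1 by norm_num]; simp only [Real.rpow_one]; ring
    exact h2.mono_set (Ioi_subset_Ioi zero_le_one)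
  refine Integrable.mono hg ?_ ?_
  · exact (Real.measurable_log.mul (by fun_prop)).aestronglyMeasurable
  · rw [ae_restrict_iff' measurableSet_Ioi]
    filter_upwards with t ht
    have h0 : (1:ℝ) < t := ht
    have hl : 0 ≤ Real.log t := Real.log_nonneg h0.le
    have hl2 : Real.log t ≤ t := (Real.log_le_sub_one_of_pos (by linarith)).trans (by linarith)
    rw [Real.norm_eq_abs, Real.norm_eq_abs, abs_of_nonneg (by positivity),
      abs_of_nonneg (by positivity)]
    exact mul_le_mul_of_nonneg_right hl2 (Real.exp_nonneg _)

lemma int5 : IntegrableOn (fun t : ℝ => Real.log t * Real.exp (-t)) (Ioc 0 1) := by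
  have hg : IntegrableOn (fun t : ℝ => 2 * t ^ (-(1/2) : ℝ)) (Ioc 0 1) :=
    Integrable.const_mul (intervalIntegral.intervalIntegrable_rpow' (by norm_num)).1 2
  refine Integrable.mono hg ?_ ?_
  · exact (Real.measurable_log.mul (by fun_prop)).aestronglyMeasurable
  · rw [ae_restrict_iff' measurableSet_Ioc]
    filter_upwards with t ht
    have h0 : 0 < t := ht.1
    have hr : (0:ℝ) < t ^ (-(1/2) : ℝ) := Real.rpow_pos_of_pos h0 _
    have hlog : Real.log (t ^ (-(1/2) : ℝ)) ≤ t ^ (-(1/2) : ℝ) - 1 :=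
      Real.log_le_sub_one_of_pos hr
    rw [Real.log_rpow h0] at hlog
    have hln : Real.log t ≤ 0 := Real.log_nonpos h0.le ht.2
    have he1 : Real.exp (-t) ≤ 1 := Real.exp_le_one_iff.mpr (by linarith)
    rw [Real.norm_eq_abs, Real.norm_eq_abs, abs_mul, abs_of_nonneg (Real.exp_nonneg _),
      abs_of_nonpos hln, abs_of_nonneg (by positivity)]
    nlinarith [Real.exp_nonneg (-t)]


lemma C1 : ∫ t in Ioc (0:ℝ) 1, (1 - Real.exp (-t))/t
    = - ∫ t in Ioc (0:ℝ) 1, Real.log t * Real.exp (-t) := by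
  have key : ∫ t in (0:ℝ)..1,
      (Real.log t * Real.exp (-t) + (1 - Real.exp (-t))/t) = 0 - 0 := by
    refine intervalIntegral.integral_eq_sub_of_hasDerivAt_of_tendsto
      (f := fun t => (1 - Real.exp (-t)) * Real.log t) one_pos ?_ ?_ ?_ ?_
    · intro t ht
      have h1 : HasDerivAt (fun x : ℝ => 1 - Real.exp (-x)) (Real.exp (-t)) t := by
        simpa using ((Real.hasDerivAt_exp (-t)).comp t ((hasDerivAt_id t).neg)).const_sub 1
      have h2 := Real.hasDerivAt_log (ne_of_gt ht.1)
      convert h1.mul h2 using 1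
      · rfl
      · funext x; simp only [Pi.mul_apply]
      · ring
    · rw [intervalIntegrable_iff_integrableOn_Ioc_of_le zero_le_one]
      exact int5.add int1
    · have hslope : Tendsto (fun t : ℝ => (1 - Real.exp (-t))/t) (𝓝[>] 0) (𝓝 1) := by
        have hd : HasDerivAt (fun x : ℝ => 1 - Real.exp (-x)) 1 0 := by
          simpa using ((Real.hasDerivAt_exp (-0)).comp 0 ((hasDerivAt_id 0).neg)).const_sub 1
        have h := hasDerivAt_iff_tendsto_slope.mp hd
        have h2 := h.mono_left (nhdsWithin_mono 0 (fun x hx => Set.mem_compl_singleton_iff.mpr (ne_of_gt hx)))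
        refine h2.congr fun t => ?_
        simp [slope_def_field, div_eq_mul_inv]
      have hlog : Tendsto (fun t : ℝ => t * Real.log t) (𝓝[>] 0) (𝓝 0) := by
        have := tendsto_log_mul_rpow_nhdsGT_zero one_pos
        simp only [Real.rpow_one] at this
        simpa [mul_comm] using this
      have := hslope.mul hlog
      rw [one_mul] at this
      refine this.congr' ?_
      filter_upwards [self_mem_nhdsWithin] with t (ht : 0 < t)
      field_simp
    · have hc : ContinuousAt (fun t : ℝ => (1 - Real.exp (-t)) * Real.log t) 1 :=
        ((continuous_const.sub (Real.continuous_exp.comp continuous_neg)).continuousAt).mul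
          (Real.continuousAt_log one_ne_zero)
      have h2 : Tendsto (fun t : ℝ => (1 - Real.exp (-t)) * Real.log t) (𝓝[<] 1)
          (𝓝 ((1 - Real.exp (-1)) * Real.log 1)) := hc.tendsto.mono_left nhdsWithin_le_nhds
      simpa using h2
  rw [intervalIntegral.integral_of_le zero_le_one, integral_add int5 int1] at key
  linarith


lemma D1 : ∫ t in Ioi (1:ℝ), Real.log t * Real.exp (-t)
    = ∫ t in Ioi (1:ℝ), Real.exp (-t)/t := by
  have key : ∫ t in Ioi (1:ℝ),
      (Real.log t * Real.exp (-t) - Real.exp (-t)/t)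
      = 0 - -(Real.log 1 * Real.exp (-1)) := by
    refine integral_Ioi_of_hasDerivAt_of_tendsto
      (f := fun t => -(Real.log t * Real.exp (-t))) ?_ ?_ ?_ ?_
    · exact (((Real.continuousAt_log one_ne_zero).mul
        ((Real.continuous_exp.comp continuous_neg).continuousAt)).neg).continuousWithinAt
    · intro t ht
      have h0 : (0:ℝ) < t := lt_trans one_pos ht
      have h1 : HasDerivAt (fun x : ℝ => Real.exp (-x)) (-Real.exp (-t)) t := by
        simpa [Function.comp_def] using ((Real.hasDerivAt_exp (-t)).comp t ((hasDerivAt_id t).neg))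
      have h2 := (Real.hasDerivAt_log (ne_of_gt h0)).mul h1
      convert h2.neg using 1
      · rfl
      · field_simp
        ring
    · exact int4.sub int3
    · have hb : Tendsto (fun t : ℝ => Real.log t * Real.exp (-t)) atTop (𝓝 0) := by
        have htop := tendsto_pow_mul_exp_neg_atTop_nhds_zero 1
        simp only [pow_one] at htop
        refine tendsto_of_tendsto_of_tendsto_of_le_of_le' tendsto_const_nhds htop ?_ ?_
        · filter_upwards [eventually_ge_atTop (1:ℝ)] with t ht
          exact mul_nonneg (Real.log_nonneg ht) (Real.exp_nonneg _)
        · filter_upwards [eventually_ge_atTop (1:ℝ)] with t ht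
          refine mul_le_mul_of_nonneg_right ?_ (Real.exp_nonneg _)
          exact (Real.log_le_sub_one_of_pos (by linarith)).trans (by linarith)
      simpa using hb.neg
  rw [integral_sub int4 int3] at key
  simp only [Real.log_one, zero_mul, neg_zero, sub_zero] at key
  linarith

lemma E1 : ∫ t in Ioo (0:ℝ) 1, Real.exp (-1/t)/t = ∫ u in Ioi (1:ℝ), Real.exp (-u)/u := by
  have himg : (fun u : ℝ => u⁻¹) '' Ioi 1 = Ioo 0 1 := by
    ext x
    simp only [mem_image, mem_Ioi, mem_Ioo]
    constructor
    · rintro ⟨u, hu, rfl⟩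
      have h0 : (0:ℝ) < u := lt_trans one_pos hu
      exact ⟨inv_pos.mpr h0, inv_lt_one_of_one_lt₀ hu⟩
    · rintro ⟨h0, h1⟩
      exact ⟨x⁻¹, one_lt_inv_iff₀.mpr ⟨h0, h1⟩, inv_inv x⟩
  have hcv := integral_image_eq_integral_abs_deriv_smul (f := fun u : ℝ => u⁻¹)
      (f' := fun u : ℝ => -(u^2)⁻¹) measurableSet_Ioi
      (fun x hx => (hasDerivAt_inv (ne_of_gt (lt_trans one_pos hx))).hasDerivWithinAt)
      inv_injective.injOn (fun t => Real.exp (-1/t)/t)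
  rw [himg] at hcv
  rw [hcv]
  refine setIntegral_congr_fun measurableSet_Ioi fun u hu => ?_
  have h0 : (0:ℝ) < u := lt_trans one_pos hu
  rw [smul_eq_mul, abs_neg, abs_inv, abs_of_nonneg (by positivity : (0:ℝ) ≤ u^2),
    show (-1/u⁻¹ : ℝ) = -u by field_simp]
  field_simp

theorem stmt_0 :
    ∫ t in (0:ℝ)..1, (1 - Real.exp (-t) - Real.exp (-1/t)) / t
      = Real.eulerMascheroniConstant := by
  rw [intervalIntegral.integral_of_le zero_le_one]
  have hpt : ∀ t : ℝ, (1 - Real.exp (-t) - Real.exp (-1/t))/t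
      = (1 - Real.exp (-t))/t - Real.exp (-1/t)/t := fun t => sub_div _ _ _
  simp only [hpt]
  rw [integral_sub int1 int2]
  have hsplit : ∫ t in Ioi (0:ℝ), Real.log t * Real.exp (-t)
      = (∫ t in Ioc (0:ℝ) 1, Real.log t * Real.exp (-t))
        + ∫ t in Ioi (1:ℝ), Real.log t * Real.exp (-t) := by
    rw [← Ioc_union_Ioi_eq_Ioi (zero_le_one (α := ℝ)),
      setIntegral_union (Ioc_disjoint_Ioi le_rfl) measurableSet_Ioi int5 int4]
  have hE : ∫ t in Ioc (0:ℝ) 1, Real.exp (-1/t)/t = ∫ u in Ioi (1:ℝ), Real.exp (-u)/u := by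
    rw [integral_Ioc_eq_integral_Ioo]; exact E1
  rw [aux_log_exp_integral] at hsplit
  rw [hE]
  linarith [C1, D1, hsplit]
end

section
/- For every integer n > 0, ∑_{k=0}^{n} C(n,k) · H_k · (-1)^{k+1} = 1/n. -/
open Finset

lemma altsum_choose_real (m : ℕ) :
    ∑ i ∈ range (m + 1), (-1 : ℝ) ^ i * ((m + 1).choose (i + 1) : ℝ) = 1 := by
  have h := Int.alternating_sum_range_choose (n := m + 1)
  simp only [Nat.succ_ne_zero, if_false] at h
  have h' : ((∑ i ∈ range (m + 2), (-1 : ℤ) ^ i * ((m + 1).choose i : ℤ) : ℤ) : ℝ) = 0 := by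
    rw [h]; norm_num
  push_cast at h'
  rw [Finset.sum_range_succ'] at h'
  simp only [pow_zero, Nat.choose_zero_right, Nat.cast_one, one_mul] at h'
  have : ∑ i ∈ range (m + 1), (-1 : ℝ) ^ (i + 1) * ((m + 1).choose (i + 1) : ℝ) = -1 := by
    linarith
  calc ∑ i ∈ range (m + 1), (-1 : ℝ) ^ i * ((m + 1).choose (i + 1) : ℝ)
      = -∑ i ∈ range (m + 1), (-1 : ℝ) ^ (i + 1) * ((m + 1).choose (i + 1) : ℝ) := by
        rw [← Finset.sum_neg_distrib]
        refine Finset.sum_congr rfl fun i _ => ?_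
        ring
    _ = 1 := by rw [this]; norm_num

lemma key_A (m : ℕ) :
    ∑ i ∈ range (m + 1), (-1 : ℝ) ^ i * (m.choose i : ℝ) / (i + 1) = 1 / (m + 1) := by
  have hm : (m : ℝ) + 1 ≠ 0 := by positivity
  have hterm : ∀ i ∈ range (m + 1),
      (-1 : ℝ) ^ i * (m.choose i : ℝ) / (i + 1)
        = (-1 : ℝ) ^ i * ((m + 1).choose (i + 1) : ℝ) / (m + 1) := by
    intro i _
    have h := Nat.add_one_mul_choose_eq m i
    have h' : ((m : ℝ) + 1) * (m.choose i : ℝ) = ((m + 1).choose (i + 1) : ℝ) * (i + 1) := by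
      exact_mod_cast h
    have hi : (i : ℝ) + 1 ≠ 0 := by positivity
    field_simp
    linear_combination h'
  rw [Finset.sum_congr rfl hterm, ← Finset.sum_div, altsum_choose_real]

theorem stmt_7 (n : ℕ) (hn : 0 < n) :
    ∑ k ∈ Finset.range (n + 1),
        (n.choose k : ℝ) * (harmonic k : ℝ) * (-1) ^ (k + 1) = 1 / n := by
  obtain ⟨m, rfl⟩ := Nat.exists_eq_succ_of_ne_zero hn.ne'
  rw [Finset.sum_range_succ']
  simp only [harmonic_zero, Rat.cast_zero, mul_zero, zero_mul, add_zero]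
  set u : ℕ → ℝ := fun k => (m.choose k : ℝ) * (harmonic k : ℝ) * (-1) ^ k with hu
  have hpt : ∀ k ∈ range (m + 1),
      ((m + 1).choose (k + 1) : ℝ) * (harmonic (k + 1) : ℝ) * (-1) ^ (k + 1 + 1)
        = (u k - u (k + 1)) + (-1 : ℝ) ^ k * (m.choose k : ℝ) / (k + 1) := by
    intro k _
    have hc : ((m + 1).choose (k + 1) : ℝ) = (m.choose k : ℝ) + (m.choose (k + 1) : ℝ) := by
      rw [Nat.choose_succ_succ]; push_cast; ring
    have hh : (harmonic (k + 1) : ℝ) = (harmonic k : ℝ) + 1 / (k + 1) := by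
      rw [harmonic_succ]; push_cast; ring
    have hi : (k : ℝ) + 1 ≠ 0 := by positivity
    rw [hc, hh, hu]
    simp only [hh]
    simp only [pow_succ]
    field_simp
    ring
  rw [Finset.sum_congr rfl hpt, Finset.sum_add_distrib, Finset.sum_range_sub' u, key_A]
  simp [hu, Nat.choose_succ_self]
end

section
/- For every real x, the Cauchy product identity e^x · ∑_{n≥0} (-1)^{n+1} H_n xⁿ/n! = ∑_{n≥1} xⁿ/(n·n!) holds, both series converging absolutely. -/
open Finset

private lemma harmonic_le_nat (n : ℕ) : (harmonic n : ℝ) ≤ n := by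
  have : (harmonic n : ℚ) ≤ n := by
    unfold harmonic
    calc ∑ i ∈ range n, ((i + 1 : ℕ) : ℚ)⁻¹ ≤ ∑ _i ∈ range n, (1:ℚ) := by
          apply Finset.sum_le_sum
          intro i _
          rw [inv_le_one_iff₀]
          right
          exact_mod_cast Nat.one_le_iff_ne_zero.mpr (Nat.succ_ne_zero i)
      _ = n := by simp
  exact_mod_cast this

private lemma alt_choose_inv (n : ℕ) :
    ∑ j ∈ range (n + 1), (-1 : ℝ) ^ j * (n.choose j) / (j + 1) = 1 / (n + 1) := by
  have key : ∑ j ∈ range (n + 1), (-1 : ℝ) ^ j * ((n+1).choose (j+1)) = 1 := by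
    have h0 : ∑ m ∈ range (n + 2), (-1 : ℝ) ^ m * ((n+1).choose m) = 0 := by
      have := Int.alternating_sum_range_choose (n := n + 1)
      rw [if_neg (Nat.succ_ne_zero n)] at this
      exact_mod_cast this
    rw [Finset.sum_range_succ' (fun m => (-1 : ℝ) ^ m * ((n+1).choose m)) (n+1)] at h0
    have h1 : ∑ j ∈ range (n+1), (-1:ℝ)^(j+1) * (((n+1).choose (j+1) : ℕ) : ℝ)
        = -∑ j ∈ range (n+1), (-1:ℝ)^j * (((n+1).choose (j+1) : ℕ) : ℝ) := by
      rw [← Finset.sum_neg_distrib]; exact Finset.sum_congr rfl fun j _ => by ring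
    rw [h1] at h0
    simp at h0
    linarith
  calc ∑ j ∈ range (n + 1), (-1 : ℝ) ^ j * (n.choose j) / (j + 1)
      = ∑ j ∈ range (n + 1), (1/((n:ℝ)+1)) * ((-1 : ℝ) ^ j * ((n+1).choose (j+1))) := by
        apply Finset.sum_congr rfl
        intro j _
        have hc : ((n:ℝ)+1) * (n.choose j) = ((n+1).choose (j+1)) * ((j:ℝ)+1) := by
          exact_mod_cast Nat.add_one_mul_choose_eq n j
        have hj1 : ((j : ℝ) + 1) ≠ 0 := by positivity
        have hn1 : ((n : ℝ) + 1) ≠ 0 := by positivity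
        have hd : (n.choose j : ℝ)/((j:ℝ)+1) = (((n+1).choose (j+1) : ℕ) : ℝ)/((n:ℝ)+1) := by
          rw [div_eq_div_iff hj1 hn1]; linarith [hc]
        rw [mul_div_assoc, hd]; ring
    _ = 1/((n:ℝ)+1) := by rw [← Finset.mul_sum, key, mul_one]

private lemma key_sum (n : ℕ) :
    ∑ k ∈ range (n + 1), (-1 : ℝ) ^ (k+1) * (n.choose k) * (harmonic k : ℝ)
      = if n = 0 then 0 else 1 / (n : ℝ) := by
  cases n with
  | zero => simp
  | succ n =>
    rw [if_neg (Nat.succ_ne_zero n)]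
    rw [Finset.sum_range_succ' (fun k => (-1 : ℝ) ^ (k+1) * ((n+1).choose k) * (harmonic k : ℝ)) (n+1)]
    simp only [harmonic_zero, Rat.cast_zero, mul_zero, add_zero]
    have expand : ∀ j, (-1 : ℝ) ^ (j+1+1) * (((n+1).choose (j+1) : ℕ) : ℝ) * (harmonic (j+1) : ℝ)
        = (-1 : ℝ) ^ j * (n.choose (j+1)) * (harmonic (j+1) : ℝ)
          + (-1 : ℝ) ^ j * (n.choose j) * (harmonic j : ℝ)
          + (-1 : ℝ) ^ j * (n.choose j) / ((j : ℝ) + 1) := by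
      intro j
      have hh : (harmonic (j+1) : ℝ) = (harmonic j : ℝ) + 1 / ((j : ℝ) + 1) := by
        rw [harmonic_succ]; push_cast; ring
      have hch : (((n+1).choose (j+1) : ℕ) : ℝ) = (n.choose j : ℝ) + (n.choose (j+1) : ℝ) := by
        exact_mod_cast Nat.choose_succ_succ n j
      have hj1 : ((j : ℝ) + 1) ≠ 0 := by positivity
      rw [hch, hh]
      field_simp
      ring
    rw [Finset.sum_congr rfl (fun j _ => expand j)]
    rw [Finset.sum_add_distrib, Finset.sum_add_distrib, alt_choose_inv]
    have hPQ : ∑ j ∈ range (n + 1), (-1 : ℝ) ^ j * (n.choose (j+1)) * (harmonic (j+1) : ℝ)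
        + ∑ j ∈ range (n + 1), (-1 : ℝ) ^ j * (n.choose j) * (harmonic j : ℝ) = 0 := by
      have hT : ∑ k ∈ range (n + 2), (-1 : ℝ) ^ k * (n.choose k) * (harmonic k : ℝ)
          = ∑ j ∈ range (n + 1), (-1 : ℝ) ^ (j+1) * (n.choose (j+1)) * (harmonic (j+1) : ℝ) := by
        rw [Finset.sum_range_succ' (fun k => (-1 : ℝ) ^ k * (n.choose k) * (harmonic k : ℝ)) (n+1)]
        simp
      have hT2 : ∑ k ∈ range (n + 2), (-1 : ℝ) ^ k * (n.choose k) * (harmonic k : ℝ)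
          = ∑ k ∈ range (n + 1), (-1 : ℝ) ^ k * (n.choose k) * (harmonic k : ℝ) := by
        rw [Finset.sum_range_succ]
        simp [Nat.choose_succ_self]
      have h3 : ∑ j ∈ range (n + 1), (-1 : ℝ) ^ (j+1) * (n.choose (j+1)) * (harmonic (j+1) : ℝ)
          = -∑ j ∈ range (n + 1), (-1 : ℝ) ^ j * (n.choose (j+1)) * (harmonic (j+1) : ℝ) := by
        rw [← Finset.sum_neg_distrib]
        exact Finset.sum_congr rfl fun j _ => by ring
      rw [h3, hT2] at hT
      linarith
    rw [hPQ]
    push_cast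
    ring

theorem stmt_8 (x : ℝ) :
    (Summable fun n : ℕ => |(-1) ^ (n + 1) * (harmonic n : ℝ) * x ^ n / Nat.factorial n|) ∧
    (Summable fun n : ℕ => |x ^ (n + 1) / ((n + 1) * Nat.factorial (n + 1))|) ∧
    Real.exp x * ∑' n : ℕ, (-1) ^ (n + 1) * (harmonic n : ℝ) * x ^ n / Nat.factorial n
      = ∑' n : ℕ, x ^ (n + 1) / ((n + 1) * Nat.factorial (n + 1)) := by
  set f : ℕ → ℝ := fun n => x ^ n / Nat.factorial n with hf
  set g : ℕ → ℝ := fun n => (-1) ^ (n + 1) * (harmonic n : ℝ) * x ^ n / Nat.factorial n with hg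
  have hfnorm : Summable fun n => ‖f n‖ := by
    apply (Real.summable_pow_div_factorial |x|).congr
    intro n
    simp [hf, abs_div, abs_pow]
  have hgnorm : Summable fun n => ‖g n‖ := by
    refine Summable.of_nonneg_of_le (f := fun n => |2 * x| ^ n / Nat.factorial n)
      (fun n => norm_nonneg _) (fun n => ?_) (Real.summable_pow_div_factorial (|2 * x|))
    have h1 : ‖g n‖ = (harmonic n : ℝ) * |x| ^ n / Nat.factorial n := by
      simp only [hg, Real.norm_eq_abs, abs_div, abs_mul, abs_pow, abs_neg, abs_one, one_pow,
        one_mul, Nat.abs_cast]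
      rw [abs_of_nonneg (show (0:ℝ) ≤ (harmonic n : ℝ) by exact_mod_cast (Finset.sum_nonneg fun i _ => by positivity : (0:ℚ) ≤ harmonic n))]
    rw [h1]
    have h2 : (harmonic n : ℝ) * |x| ^ n ≤ |2 * x| ^ n := by
      have hle : (harmonic n : ℝ) ≤ 2 ^ n :=
        le_trans (harmonic_le_nat n) (by exact_mod_cast Nat.le_of_lt (Nat.lt_two_pow_self (n := n)))
      calc (harmonic n : ℝ) * |x| ^ n ≤ 2 ^ n * |x| ^ n :=
            mul_le_mul_of_nonneg_right hle (by positivity)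
        _ = |2 * x| ^ n := by rw [abs_mul, mul_pow]; norm_num
    exact div_le_div_of_nonneg_right h2 (by positivity) |>.trans_eq rfl
  -- Cauchy product
  have hcauchy : (∑' n, f n) * (∑' n, g n) = ∑' n, ∑ kl ∈ Finset.HasAntidiagonal.antidiagonal n, f kl.1 * g kl.2 :=
    tsum_mul_tsum_eq_tsum_sum_antidiagonal_of_summable_norm hfnorm hgnorm
  set c : ℕ → ℝ := fun n => ∑ kl ∈ Finset.HasAntidiagonal.antidiagonal n, f kl.1 * g kl.2 with hc
  have hcsum : Summable c :=
    (summable_norm_sum_mul_antidiagonal_of_summable_norm hfnorm hgnorm).of_norm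
  -- closed form of c
  have hcval : ∀ n, c n = (if n = 0 then 0 else 1 / (n : ℝ)) * (x ^ n / Nat.factorial n) := by
    intro n
    have hswap : c n = ∑ kl ∈ Finset.HasAntidiagonal.antidiagonal n, g kl.1 * f kl.2 := by
      rw [hc]
      calc ∑ kl ∈ Finset.HasAntidiagonal.antidiagonal n, f kl.1 * g kl.2
          = ∑ kl ∈ Finset.HasAntidiagonal.antidiagonal n, g kl.2 * f kl.1 :=
            Finset.sum_congr rfl fun kl _ => mul_comm _ _
        _ = ∑ kl ∈ Finset.HasAntidiagonal.antidiagonal n, g kl.1 * f kl.2 := by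
            have h := Finset.Nat.sum_antidiagonal_swap (n := n) (f := fun kl => g kl.1 * f kl.2)
            simpa using h
    rw [hswap, Finset.Nat.sum_antidiagonal_eq_sum_range_succ_mk]
    rw [← key_sum n, Finset.sum_mul]
    apply Finset.sum_congr rfl
    intro l hl
    have hln : l ≤ n := Nat.lt_succ_iff.mp (Finset.mem_range.mp hl)
    have hfac : ((n.factorial : ℕ) : ℝ) = (n.choose l : ℝ) * (l.factorial : ℝ) * ((n - l).factorial : ℝ) := by
      exact_mod_cast (Nat.choose_mul_factorial_mul_factorial hln).symm
    have hxp : x ^ l * x ^ (n - l) = x ^ n := by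
      rw [← pow_add, Nat.add_sub_cancel' hln]
    have hl0 : ((l.factorial : ℕ) : ℝ) ≠ 0 := by exact_mod_cast l.factorial_ne_zero
    have hnl0 : (((n - l).factorial : ℕ) : ℝ) ≠ 0 := by exact_mod_cast (n - l).factorial_ne_zero
    have hn0 : ((n.factorial : ℕ) : ℝ) ≠ 0 := by exact_mod_cast n.factorial_ne_zero
    have hC0 : (n.choose l : ℝ) ≠ 0 := by
      exact_mod_cast (Nat.choose_pos hln).ne'
    have hkey : (x ^ l / (l.factorial : ℝ)) * (x ^ (n - l) / ((n - l).factorial : ℝ))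
        = (n.choose l : ℝ) * x ^ n / (n.factorial : ℝ) := by
      rw [div_mul_div_comm, hxp, hfac]
      field_simp
    calc g l * f (n - l)
        = ((-1 : ℝ) ^ (l + 1) * (harmonic l : ℝ))
            * ((x ^ l / (l.factorial : ℝ)) * (x ^ (n - l) / ((n - l).factorial : ℝ))) := by
          simp only [hg, hf]; ring
      _ = (-1 : ℝ) ^ (l+1) * (n.choose l) * (harmonic l : ℝ) * (x ^ n / Nat.factorial n) := by
          rw [hkey]; ring
  have hterm : ∀ n : ℕ, c (n + 1) = x ^ (n + 1) / (((n : ℝ) + 1) * Nat.factorial (n + 1)) := by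
    intro n
    rw [hcval (n + 1), if_neg (Nat.succ_ne_zero n)]
    have h1 : ((n : ℝ) + 1) ≠ 0 := by positivity
    have h2 : ((Nat.factorial (n + 1) : ℕ) : ℝ) ≠ 0 := by
      exact_mod_cast (n + 1).factorial_ne_zero
    push_cast
    field_simp
  have hcn : Summable fun n => ‖c n‖ :=
    summable_norm_sum_mul_antidiagonal_of_summable_norm hfnorm hgnorm
  refine ⟨hgnorm, ?_, ?_⟩
  · apply (hcn.comp_injective Nat.succ_injective).congr
    intro n
    show ‖c (n + 1)‖ = _
    rw [hterm n, Real.norm_eq_abs]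
  · have hexp : Real.exp x = ∑' n, f n := by
      rw [Real.exp_eq_exp_ℝ, NormedSpace.exp_eq_tsum_div]
    rw [hexp]
    calc (∑' n, f n) * (∑' n, g n) = tsum c := hcauchy
      _ = c 0 + ∑' n, c (n + 1) := Summable.tsum_eq_zero_add hcsum
      _ = ∑' n : ℕ, x ^ (n + 1) / (((n : ℝ) + 1) * Nat.factorial (n + 1)) := by
          rw [hcval 0]
          norm_num
          exact tsum_congr hterm
end

section
/- e · ∑_{n≥0} (-1)^n H_n / n! = ∫₀¹ (1 - e^{1-t})/(1-t) dt. -/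
open MeasureTheory Set

private noncomputable def Fser : ℕ → ℝ → ℝ :=
  fun n t => (-1) ^ n / (Nat.factorial n : ℝ) * ∑ j ∈ Finset.range n, t ^ j

private lemma exp_tsum (x : ℝ) : Real.exp x = ∑' n : ℕ, x ^ n / Nat.factorial n := by
  rw [Real.exp_eq_exp_ℝ, NormedSpace.exp_eq_tsum_div]

private lemma Fser_cont (n : ℕ) : Continuous (Fser n) := by
  unfold Fser
  exact continuous_const.mul (continuous_finset_sum _ fun j _ => continuous_pow j)

private lemma Fser_integral (n : ℕ) :
    ∫ t in Ioo (0:ℝ) 1, Fser n t = (-1) ^ n * (harmonic n : ℝ) / Nat.factorial n := by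
  rw [← integral_Ioc_eq_integral_Ioo, ← intervalIntegral.integral_of_le zero_le_one]
  unfold Fser
  rw [intervalIntegral.integral_const_mul, intervalIntegral.integral_finset_sum
    (fun j _ => intervalIntegral.intervalIntegrable_pow j)]
  have : ∀ j ∈ Finset.range n, (∫ t in (0:ℝ)..1, t ^ j) = ((j:ℝ) + 1)⁻¹ := by
    intro j _
    rw [integral_pow]
    simp
  rw [Finset.sum_congr rfl this]
  have hh : (harmonic n : ℝ) = ∑ j ∈ Finset.range n, ((j:ℝ) + 1)⁻¹ := by
    rw [harmonic]
    push_cast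
    rfl
  rw [hh]
  ring

private lemma Fser_bound (n : ℕ) :
    ∫ t in Ioo (0:ℝ) 1, ‖Fser n t‖ ≤ (n : ℝ) / Nat.factorial n := by
  have hint : IntegrableOn (fun t => ‖Fser n t‖) (Ioo (0:ℝ) 1) :=
    ((Fser_cont n).norm.integrableOn_Ioc).mono_set Ioo_subset_Ioc_self
  have hb : ∀ t ∈ Ioo (0:ℝ) 1, ‖Fser n t‖ ≤ (n : ℝ) / Nat.factorial n := by
    intro t ht
    unfold Fser
    rw [norm_mul]
    have h1 : ‖((-1:ℝ)) ^ n / (Nat.factorial n : ℝ)‖ = (Nat.factorial n : ℝ)⁻¹ := by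
      rw [norm_div, norm_pow, norm_neg, norm_one, one_pow]
      simp [Real.norm_eq_abs, abs_of_nonneg]
    rw [h1]
    have h2 : ‖∑ j ∈ Finset.range n, t ^ j‖ ≤ (n : ℝ) := by
      calc ‖∑ j ∈ Finset.range n, t ^ j‖ ≤ ∑ j ∈ Finset.range n, ‖t ^ j‖ :=
            norm_sum_le _ _
        _ ≤ ∑ j ∈ Finset.range n, (1:ℝ) := by
            apply Finset.sum_le_sum
            intro j _
            rw [norm_pow, Real.norm_eq_abs, abs_of_nonneg ht.1.le]
            exact pow_le_one₀ ht.1.le ht.2.le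
        _ = (n : ℝ) := by simp
    calc (Nat.factorial n : ℝ)⁻¹ * ‖∑ j ∈ Finset.range n, t ^ j‖
        ≤ (Nat.factorial n : ℝ)⁻¹ * (n : ℝ) := by
          apply mul_le_mul_of_nonneg_left h2
          positivity
      _ = (n : ℝ) / Nat.factorial n := by ring
  calc ∫ t in Ioo (0:ℝ) 1, ‖Fser n t‖
      ≤ ∫ _t in Ioo (0:ℝ) 1, ((n : ℝ) / Nat.factorial n) := by
        apply setIntegral_mono_on hint (integrableOn_const (by simp))
          measurableSet_Ioo hb
    _ = (n : ℝ) / Nat.factorial n := by simp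

private lemma summable_n_div_fact : Summable (fun n : ℕ => (n : ℝ) / Nat.factorial n) := by
  apply Summable.of_nonneg_of_le (fun n => by positivity)
    (fun n => ?_) (Real.summable_pow_div_factorial 2)
  have hf : (0:ℝ) < Nat.factorial n := by exact_mod_cast Nat.factorial_pos n
  have hn : (n : ℝ) ≤ 2 ^ n := by exact_mod_cast (Nat.lt_two_pow_self (n := n)).le
  exact div_le_div_of_nonneg_right hn hf.le

theorem stmt_10 :
    Real.exp 1 * ∑' n : ℕ, (-1) ^ n * (harmonic n : ℝ) / Nat.factorial n
      = ∫ t in (0:ℝ)..1, (1 - Real.exp (1 - t)) / (1 - t) := by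
  have hkey : ∑' n : ℕ, (-1) ^ n * (harmonic n : ℝ) / Nat.factorial n
      = ∫ t in Ioo (0:ℝ) 1, ∑' n : ℕ, Fser n t := by
    rw [← integral_tsum_of_summable_integral_norm
      (fun n => ((Fser_cont n).integrableOn_Ioc).mono_set Ioo_subset_Ioc_self)
      (Summable.of_nonneg_of_le
        (fun n => integral_nonneg (fun t => norm_nonneg _))
        Fser_bound summable_n_div_fact)]
    exact tsum_congr fun n => (Fser_integral n).symm
  rw [hkey, intervalIntegral.integral_of_le zero_le_one, integral_Ioc_eq_integral_Ioo,
    ← MeasureTheory.integral_const_mul]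
  apply setIntegral_congr_fun measurableSet_Ioo
  intro t ht
  have ht1 : t ≠ 1 := ne_of_lt ht.2
  have h1t : (1:ℝ) - t ≠ 0 := sub_ne_zero.2 (Ne.symm ht1)
  have hF : ∀ n : ℕ, Fser n t
      = ((-1) ^ n / Nat.factorial n - (-t) ^ n / Nat.factorial n) * (1 - t)⁻¹ := by
    intro n
    unfold Fser
    rw [geom_sum_eq ht1]
    have hts : t - 1 ≠ 0 := sub_ne_zero.2 ht1
    have hnp : (-t) ^ n = (-1) ^ n * t ^ n := by rw [neg_pow]
    rw [hnp]
    field_simp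
    ring
  have hsum : ∑' n : ℕ, Fser n t
      = (Real.exp (-1) - Real.exp (-t)) * (1 - t)⁻¹ := by
    rw [tsum_congr hF, tsum_mul_right,
      Summable.tsum_sub (Real.summable_pow_div_factorial (-1)) (Real.summable_pow_div_factorial (-t)),
      ← exp_tsum, ← exp_tsum]
  show Real.exp 1 * ∑' n : ℕ, Fser n t = (1 - Real.exp (1 - t)) / (1 - t)
  rw [hsum]
  have e1 : Real.exp 1 * Real.exp (-1) = 1 := by
    rw [← Real.exp_add]; simp
  have e2 : Real.exp 1 * Real.exp (-t) = Real.exp (1 - t) := by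
    rw [← Real.exp_add]; ring_nf
  field_simp
  rw [mul_sub, e1, e2]
end
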